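/- Let (K₁, K₁⁺), …, (Kₙ, Kₙ⁺) be partially ordered abelian groups, let K = K₁ × ⋯ × Kₙ with the product cone K⁺ = K₁⁺ × ⋯ × Kₙ⁺, and let G ≤ K be a maximally singular subgroup. For each i set Gᵢ⁰ = {x ∈ Kᵢ : ιᵢ(x) ∈ G}, where ιᵢ : Kᵢ → K places x in the i-th coordinate and 0 elsewhere; let Hᵢ = Kᵢ/Gᵢ⁰ with quotient cone Hᵢ⁺ = {x + Gᵢ⁰ : ∃ y ∈ Gᵢ⁰ with x + y ∈ Kᵢ⁺}, let πᵢ : Kᵢ → Hᵢ be the quotient map, and let π = π₁ × ⋯ × πₙ : K → H₁ × ⋯ × Hₙ, with H₁ × ⋯ × Hₙ carrying the product cone H₁⁺ × ⋯ × Hₙ⁺. Then: (i) π(G) ∩ (H₁⁺ × ⋯ × Hₙ⁺) = {0}, i.e., π(G) is singular; (ii) π(G) is maximally singular in H₁ × ⋯ × Hₙ; (iii) if yᵢ ∈ Hᵢ and the element of H₁ × ⋯ × Hₙ with i-th coordinate yᵢ and all other coordinates 0 lies in π(G), then yᵢ = 0. -/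
import Mathlib


/-- Claim 1 in Proposition 5.5: the image of a maximally singular
subgroup of a finite product of partially ordered abelian groups under the coordinatewise
quotient by the groups Gᵢ⁰ is maximally singular, and contains no nonzero element
supported in a single coordinate. -/
theorem stmt_14 {n : ℕ} (K : Fin n → Type*) [∀ i, AddCommGroup (K i)]
    (Kpos : ∀ i, Set (K i))
    (hzero : ∀ i, (0 : K i) ∈ Kpos i)
    (hadd : ∀ i, ∀ a ∈ Kpos i, ∀ b ∈ Kpos i, a + b ∈ Kpos i)
    (hpointed : ∀ i, ∀ a : K i, a ∈ Kpos i → -a ∈ Kpos i → a = 0)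
    (G : AddSubgroup (∀ i, K i))
    (hGsing : ∀ f ∈ G, (∀ i, f i ∈ Kpos i) → f = 0)
    (hGmax : ∀ G' : AddSubgroup (∀ i, K i),
      (∀ f ∈ G', (∀ i, f i ∈ Kpos i) → f = 0) → G ≤ G' → G' = G)
    (Gzero : ∀ i, AddSubgroup (K i))
    (hGzero : ∀ (i : Fin n) (x : K i), x ∈ Gzero i ↔ Pi.single i x ∈ G)
    (Hpos : ∀ i, Set (K i ⧸ Gzero i))
    (hHpos : ∀ i, Hpos i = {ξ : K i ⧸ Gzero i |
      ∃ x : K i, QuotientAddGroup.mk x = ξ ∧ ∃ y ∈ Gzero i, x + y ∈ Kpos i})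
    (π : (∀ i, K i) →+ ∀ i, K i ⧸ Gzero i)
    (hπ : ∀ (f : ∀ i, K i) (i : Fin n), π f i = QuotientAddGroup.mk (f i)) :
    (∀ z ∈ G.map π, (∀ i, z i ∈ Hpos i) → z = 0) ∧
    (∀ L : AddSubgroup (∀ i, K i ⧸ Gzero i),
      (∀ z ∈ L, (∀ i, z i ∈ Hpos i) → z = 0) → G.map π ≤ L → L = G.map π) ∧
    (∀ (i : Fin n) (y : K i ⧸ Gzero i), Pi.single i y ∈ G.map π → y = 0) := by
  classical
  -- if all coordinates lie in Gzero, the element lies in G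
  have memG : ∀ g : ∀ i, K i, (∀ i, g i ∈ Gzero i) → g ∈ G := by
    intro g hg
    have hsum : g = ∑ i, Pi.single i (g i) := (Finset.univ_sum_single g).symm
    rw [hsum]
    exact AddSubgroup.sum_mem G fun i _ => (hGzero i (g i)).mp (hg i)
  have πzero : ∀ f : ∀ i, K i, (∀ i, f i ∈ Gzero i) → π f = 0 := by
    intro f hf
    funext i
    rw [hπ]
    exact (QuotientAddGroup.eq_zero_iff _).mpr (hf i)
  -- part (i)
  have sing : ∀ z ∈ G.map π, (∀ i, z i ∈ Hpos i) → z = 0 := by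
    intro z hz hpos
    obtain ⟨f, hf, rfl⟩ := hz
    have h : ∀ i, ∃ g ∈ Gzero i, f i + g ∈ Kpos i := by
      intro i
      have hp := hpos i
      rw [hHpos i] at hp
      obtain ⟨x, hx, y, hy, hxy⟩ := hp
      rw [hπ] at hx
      have hd : -x + f i ∈ Gzero i := (QuotientAddGroup.eq).mp hx
      refine ⟨y - (-x + f i), sub_mem hy hd, ?_⟩
      have : f i + (y - (-x + f i)) = x + y := by abel
      rwa [this]
    choose g hg hfg using h
    have hgG : g ∈ G := memG g hg
    have hfgG : f + g ∈ G := add_mem hf hgG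
    have hfg0 : f + g = 0 := hGsing _ hfgG fun i => hfg i
    have hfi : ∀ i, f i ∈ Gzero i := by
      intro i
      have : f i = -(g i) := by
        have := congrFun hfg0 i
        simpa [eq_neg_iff_add_eq_zero] using this
      rw [this]
      exact neg_mem (hg i)
    exact πzero f hfi
  refine ⟨sing, ?_, ?_⟩
  · -- part (ii): maximality
    intro L hLsing hsub
    have hG' : L.comap π = G := by
      apply hGmax
      · intro f hf hfpos
        have hπf : π f ∈ L := hf
        have hπfpos : ∀ i, π f i ∈ Hpos i := by
          intro i
          rw [hHpos i]
          exact ⟨f i, (hπ f i).symm, 0, zero_mem _, by simpa using hfpos i⟩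
        have h0 : π f = 0 := hLsing _ hπf hπfpos
        have hfG : f ∈ G := by
          apply memG
          intro i
          have : QuotientAddGroup.mk (f i) = (0 : K i ⧸ Gzero i) := by
            rw [← hπ]; exact congrFun h0 i
          exact (QuotientAddGroup.eq_zero_iff _).mp this
        exact hGsing f hfG hfpos
      · intro f hf
        exact hsub ⟨f, hf, rfl⟩
    apply le_antisymm _ hsub
    intro z hz
    obtain ⟨f, hfeq⟩ : ∃ f : ∀ i, K i, π f = z := by
      have hsurj : ∀ i, ∃ x : K i, QuotientAddGroup.mk x = z i := fun i =>
        QuotientAddGroup.mk_surjective (z i)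
      choose f hf using hsurj
      exact ⟨f, funext fun i => (hπ f i).trans (hf i)⟩
    have : f ∈ L.comap π := by simp [AddSubgroup.mem_comap, hfeq, hz]
    rw [hG'] at this
    exact ⟨f, this, hfeq⟩
  · -- part (iii)
    intro i y hy
    obtain ⟨f, hf, hfeq⟩ := hy
    have hj : ∀ j, j ≠ i → f j ∈ Gzero j := by
      intro j hji
      have : QuotientAddGroup.mk (f j) = (0 : K j ⧸ Gzero j) := by
        rw [← hπ, hfeq]
        exact Pi.single_eq_of_ne hji _
      exact (QuotientAddGroup.eq_zero_iff _).mp this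
    -- subtract the part away from coordinate i
    set g : ∀ j, K j := fun j => if j = i then 0 else f j with hgdef
    have hgG : g ∈ G := by
      apply memG
      intro j
      by_cases h : j = i
      · simpa [hgdef, h] using zero_mem (Gzero j)
      · simpa [hgdef, h] using hj j h
    have hfi : f - g = Pi.single i (f i) := by
      funext j
      by_cases h : j = i
      · subst h; simp [hgdef]
      · simp [hgdef, h, Pi.single_eq_of_ne h]
    have hfiG : Pi.single i (f i) ∈ G := hfi ▸ sub_mem hf hgG
    have hfiz : f i ∈ Gzero i := (hGzero i (f i)).mpr hfiG
    have : y = QuotientAddGroup.mk (f i) := by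
      rw [← hπ, hfeq, Pi.single_eq_same]
    rw [this]
    exact (QuotientAddGroup.eq_zero_iff _).mpr hfiz
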